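/- arXiv:2011.08015 — 2 statements merged into one kernel-verified Lean document; each statement's English description precedes it below -/
import Mathlib

section
/- Let Td(n; d_1,…,d_r) := Σ_{j=0}^{r} (-1)^{n+r+j} Σ_{1 ≤ k_1 < ⋯ < k_j ≤ r} C(-1 + d_{k_1} + ⋯ + d_{k_j}, n+r), with r ≥ 2 and d_1,…,d_r > 1. Suppose that for each j with 1 ≤ j ≤ r, one has n + r - Σ_{i=1}^{r} d_i + d_j ≥ 0, and that c_1 := n + r + 1 - Σ_{i=1}^{r} d_i < 0. Then Td(n; d_1,…,d_r) = 1 + (-1)^n C(-1 + d_1 + ⋯ + d_r, n + r), and consequently (-1)^n Td(n; d_1,…,d_r) ≥ n + r. -/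
open Finset

/-- Generalized binomial coefficient `C(a, k) = a(a-1)⋯(a-k+1)/k!`. -/
def gbc (a : ℚ) (k : ℕ) : ℚ :=
  (∏ i ∈ Finset.range k, (a - i)) / (Nat.factorial k)


/-- Todd genus of the complete intersection `X_n(d₁,…,d_r)` via the combinatorial formula. -/
def Td (n r : ℕ) (d : Fin r → ℤ) : ℚ :=
  ∑ S ∈ (Finset.univ : Finset (Fin r)).powerset,
    (-1) ^ (n + r + S.card) * gbc (-1 + ∑ i ∈ S, (d i : ℚ)) (n + r)

lemma gbc_nat_zero (m k : ℕ) (h : m < k) : gbc (m : ℚ) k = 0 := by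
  unfold gbc
  rw [Finset.prod_eq_zero (Finset.mem_range.2 h) (by simp)]
  simp

lemma prod_desc (m k : ℕ) (h : k ≤ m) :
    (∏ i ∈ Finset.range k, ((m : ℚ) - i)) = (m.descFactorial k : ℚ) := by
  induction k with
  | zero => simp
  | succ k ih =>
    rw [Finset.prod_range_succ, ih (by omega), Nat.descFactorial_succ]
    have : ((m - k : ℕ) : ℚ) = (m : ℚ) - k := by
      push_cast [Nat.cast_sub (by omega : k ≤ m)]; ring
    push_cast [this]
    ring

lemma gbc_nat_choose (m k : ℕ) (h : k ≤ m) : gbc (m : ℚ) k = (m.choose k : ℚ) := by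
  unfold gbc
  rw [prod_desc m k h, Nat.descFactorial_eq_factorial_mul_choose]
  have : (k.factorial : ℚ) ≠ 0 := by positivity
  field_simp
  exact Nat.cast_mul _ _

lemma gbc_neg_one (k : ℕ) : gbc (-1 : ℚ) k = (-1) ^ k := by
  have hp : (∏ i ∈ Finset.range k, ((-1 : ℚ) - i)) = (-1) ^ k * k.factorial := by
    induction k with
    | zero => simp
    | succ k ih =>
      rw [Finset.prod_range_succ, ih, Nat.factorial_succ]
      push_cast
      ring
  unfold gbc
  rw [hp]
  have : (k.factorial : ℚ) ≠ 0 := by positivity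
  field_simp

theorem todd_neg_c1_collapse (n r : ℕ) (hr : 2 ≤ r) (d : Fin r → ℤ) (hd : ∀ i, 1 < d i)
    (hj : ∀ j, 0 ≤ (n : ℤ) + r - ∑ i, d i + d j)
    (hc : (n : ℤ) + r + 1 - ∑ i, d i < 0) :
    Td n r d = 1 + (-1) ^ n * gbc (-1 + ∑ i, (d i : ℚ)) (n + r) ∧
      (n : ℚ) + r ≤ (-1) ^ n * Td n r d := by
  have hne : (∅ : Finset (Fin r)) ≠ Finset.univ := by
    intro h
    have h0 : (⟨0, by omega⟩ : Fin r) ∈ (Finset.univ : Finset (Fin r)) := Finset.mem_univ _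
    rw [← h] at h0
    simp at h0
  -- vanishing of intermediate terms
  have hvanish : ∀ S ∈ (Finset.univ : Finset (Fin r)).powerset,
      S ∉ ({∅, Finset.univ} : Finset (Finset (Fin r))) →
      (-1 : ℚ) ^ (n + r + S.card) * gbc (-1 + ∑ i ∈ S, (d i : ℚ)) (n + r) = 0 := by
    intro S _ hS
    simp only [Finset.mem_insert, Finset.mem_singleton] at hS
    push_neg at hS
    obtain ⟨hSne, hSuniv⟩ := hS
    obtain ⟨j, hj'⟩ : ∃ j, j ∉ S := by
      by_contra h
      push_neg at h
      exact hSuniv (Finset.eq_univ_iff_forall.2 h)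
    obtain ⟨i0, hi0⟩ := hSne
    set s : ℤ := ∑ i ∈ S, d i with hs
    have hs1 : 1 ≤ s := by
      have := Finset.single_le_sum (f := d) (fun i _ => le_of_lt (lt_trans one_pos (hd i))) hi0
      have := hd i0
      omega
    have hsle : s ≤ ∑ i, d i - d j := by
      have hsub : S ⊆ Finset.univ.erase j := fun x hx =>
        Finset.mem_erase.2 ⟨fun h => hj' (h ▸ hx), Finset.mem_univ x⟩
      have h1 : s ≤ ∑ i ∈ Finset.univ.erase j, d i :=
        Finset.sum_le_sum_of_subset_of_nonneg hsub
          (fun i _ _ => le_of_lt (lt_trans one_pos (hd i)))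
      rw [Finset.sum_erase_eq_sub (Finset.mem_univ j)] at h1
      exact h1
    have hub : s - 1 < (n : ℤ) + r := by
      have := hj j
      omega
    set m : ℕ := (s - 1).toNat with hm
    have hmcast : ((m : ℤ) : ℚ) = -1 + (s : ℚ) := by
      rw [hm, Int.toNat_of_nonneg (by omega)]
      push_cast
      ring
    have hmlt : m < n + r := by
      have : (m : ℤ) < (n : ℤ) + r := by
        rw [hm, Int.toNat_of_nonneg (by omega)]; omega
      exact_mod_cast this
    have hsumcast : (∑ i ∈ S, (d i : ℚ)) = (s : ℚ) := by push_cast [hs]; ring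
    rw [hsumcast, show (-1 + (s : ℚ)) = ((m : ℤ) : ℚ) from hmcast.symm]
    have : gbc ((m : ℕ) : ℚ) (n + r) = 0 := gbc_nat_zero m (n + r) hmlt
    push_cast
    push_cast at this
    rw [this, mul_zero]
  have hsplit : Td n r d =
      ∑ S ∈ ({∅, Finset.univ} : Finset (Finset (Fin r))),
        (-1 : ℚ) ^ (n + r + S.card) * gbc (-1 + ∑ i ∈ S, (d i : ℚ)) (n + r) := by
    unfold Td
    refine (Finset.sum_subset ?_ ?_).symm
    · intro S hS
      simp
    · intro S hS hS'
      exact hvanish S hS hS'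
  rw [Finset.sum_pair hne] at hsplit
  have hempty : (-1 : ℚ) ^ (n + r + (∅ : Finset (Fin r)).card) *
      gbc (-1 + ∑ i ∈ (∅ : Finset (Fin r)), (d i : ℚ)) (n + r) = 1 := by
    simp only [Finset.card_empty, Finset.sum_empty, add_zero]
    rw [gbc_neg_one]
    rw [← pow_add, ← two_mul, pow_mul]
    norm_num
  have huniv : (-1 : ℚ) ^ (n + r + (Finset.univ : Finset (Fin r)).card) *
      gbc (-1 + ∑ i ∈ (Finset.univ : Finset (Fin r)), (d i : ℚ)) (n + r) =
      (-1) ^ n * gbc (-1 + ∑ i, (d i : ℚ)) (n + r) := by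
    congr 1
    rw [Finset.card_univ, Fintype.card_fin]
    rw [show n + r + r = n + 2 * r by ring, pow_add, pow_mul]
    norm_num
  have hTd : Td n r d = 1 + (-1) ^ n * gbc (-1 + ∑ i, (d i : ℚ)) (n + r) := by
    rw [hsplit, hempty, huniv]
  refine ⟨hTd, ?_⟩
  -- lower bound
  set s : ℤ := ∑ i, d i with hs
  have hsbig : (n : ℤ) + r + 2 ≤ s := by omega
  set m : ℕ := (s - 1).toNat with hm
  have hmge : n + r + 1 ≤ m := by
    have : ((n : ℤ) + r + 1) ≤ (m : ℤ) := by
      rw [hm, Int.toNat_of_nonneg (by omega)]; omega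
    exact_mod_cast this
  have hmcast : ((m : ℚ)) = -1 + (s : ℚ) := by
    have : ((m : ℤ) : ℚ) = -1 + (s : ℚ) := by
      rw [hm, Int.toNat_of_nonneg (by omega)]
      push_cast
      ring
    exact_mod_cast this
  have hsumcast : (∑ i, (d i : ℚ)) = (s : ℚ) := by push_cast [hs]; ring
  have hgbc : gbc (-1 + ∑ i, (d i : ℚ)) (n + r) = (m.choose (n + r) : ℚ) := by
    rw [hsumcast, ← hmcast]
    exact gbc_nat_choose m (n + r) (by omega)
  have hchoose : (n : ℚ) + r + 1 ≤ (m.choose (n + r) : ℚ) := by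
    have h1 : (n + r + 1).choose (n + r) ≤ m.choose (n + r) :=
      Nat.choose_le_choose _ hmge
    rw [Nat.choose_succ_self_right] at h1
    have : ((n + r + 1 : ℕ) : ℚ) ≤ (m.choose (n + r) : ℚ) := by exact_mod_cast h1
    push_cast at this
    linarith
  rw [hTd]
  have hpow : (-1 : ℚ) ^ n * (1 + (-1) ^ n * gbc (-1 + ∑ i, (d i : ℚ)) (n + r)) =
      (-1) ^ n + gbc (-1 + ∑ i, (d i : ℚ)) (n + r) := by
    rw [mul_add, mul_one, ← mul_assoc, ← pow_add, ← two_mul, pow_mul]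
    norm_num
  rw [hpow, hgbc]
  have hn1 : (-1 : ℚ) ≤ (-1 : ℚ) ^ n := by
    rcases Nat.even_or_odd n with h | h
    · rw [h.neg_one_pow]; norm_num
    · rw [h.neg_one_pow]
  linarith
end

section
/- In the formal power series ring ℚ[[z]], the identity Σ_{n=0}^{∞} Td(n; d_1,…,d_r) z^{n+r} = (1-z)^{-1} · ∏_{i=1}^{r} (1 - (1-z)^{d_i}) holds, where Td(n; d) := Σ_{j=0}^{r} (-1)^{n+r+j} Σ_{1 ≤ k_1 < ⋯ < k_j ≤ r} C(-1 + d_{k_1} + ⋯ + d_{k_j}, n+r). -/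
open Finset

lemma gbc_zero (a : ℚ) : gbc a 0 = 1 := by simp [gbc]

lemma gbc_succ (a : ℚ) (m : ℕ) : gbc a (m+1) = gbc a m * (a - m) / (m+1) := by
  simp only [gbc, Finset.prod_range_succ, Nat.factorial_succ]
  push_cast
  rw [div_mul_eq_mul_div, div_div, mul_comm ((Nat.factorial m : ℚ)) ((m:ℚ)+1)]

lemma gbc_nat (N m : ℕ) : gbc (N : ℚ) m = N.choose m := by
  induction m with
  | zero => simp [gbc_zero]
  | succ m ih =>
    rw [gbc_succ, ih]
    rcases lt_trichotomy m N with h | h | h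
    · have hc : ((N.choose (m+1) : ℚ)) * ((m:ℚ)+1) = (N.choose m : ℚ) * ((N:ℚ) - m) := by
        calc (N.choose (m+1):ℚ) * ((m:ℚ)+1) = ((N.choose (m+1) * (m+1) : ℕ) : ℚ) := by
              push_cast; ring
        _ = ((N.choose m * (N-m) : ℕ) : ℚ) := by rw [Nat.choose_succ_right_eq]
        _ = _ := by push_cast [Nat.cast_sub h.le]; ring
      have h1 : ((m:ℚ)+1) ≠ 0 := by positivity
      field_simp
      linarith [hc]
    · subst h
      simp [Nat.choose_succ_self]
    · rw [Nat.choose_eq_zero_of_lt h, Nat.choose_eq_zero_of_lt (by omega)]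
      simp

lemma gbc_pascal (a : ℚ) (k : ℕ) : gbc a (k+1) = gbc (a-1) (k+1) + gbc (a-1) k := by
  have key : ∏ i ∈ Finset.range (k+1), (a - i) = (∏ i ∈ Finset.range k, ((a-1) - i)) * a := by
    rw [Finset.prod_range_succ' (fun i => a - (i:ℕ))]
    congr 1
    · exact Finset.prod_congr rfl (fun i _ => by push_cast; ring)
    · simp
  simp only [gbc, key, Finset.prod_range_succ, Nat.factorial_succ]
  have h : ((k:ℚ) + 1) ≠ 0 := by positivity
  have h2 : (Nat.factorial k : ℚ) ≠ 0 := Nat.cast_ne_zero.mpr (Nat.factorial_ne_zero k)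
  push_cast
  field_simp
  ring

lemma alt_sum (N m : ℕ) :
    ∑ k ∈ Finset.range (m+1), (-1:ℚ)^k * (N.choose k) = (-1)^m * gbc ((N:ℚ) - 1) m := by
  induction m with
  | zero => simp [gbc_zero]
  | succ m ih =>
    rw [Finset.sum_range_succ, ih, ← gbc_nat N (m+1), gbc_pascal]
    ring

open PowerSeries

lemma coeff_one_sub_X_pow (N m : ℕ) :
    (PowerSeries.coeff m) ((1 - PowerSeries.X)^N) = (-1:ℚ)^m * (N.choose m : ℚ) := by
  have h1 : ((1:ℚ⟦X⟧) - PowerSeries.X)^N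
      = ∑ k ∈ Finset.range (N+1),
          PowerSeries.C ((-1)^k * (N.choose k : ℚ)) * PowerSeries.X^k := by
    rw [sub_eq_neg_add, add_pow]
    refine Finset.sum_congr rfl fun k hk => ?_
    rw [neg_pow, one_pow]
    simp only [map_mul, map_pow, map_neg, map_one, ← map_natCast (PowerSeries.C (R := ℚ))]
    push_cast
    ring
  rw [h1, map_sum]
  simp only [PowerSeries.coeff_C_mul, PowerSeries.coeff_X_pow, mul_ite, mul_one, mul_zero]
  rw [Finset.sum_ite_eq (Finset.range (N+1)) m]
  by_cases h : m ≤ N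
  · simp [Finset.mem_range, Nat.lt_succ_iff, h]
  · push_neg at h
    simp [Finset.mem_range, Nat.lt_succ_iff, not_le.mpr h, Nat.choose_eq_zero_of_lt h]

theorem todd_generating_function (r : ℕ) (hr : 1 ≤ r) (d : Fin r → ℕ) (hd : ∀ i, 0 < d i) :
    (PowerSeries.mk fun n => Td n r fun i => (d i : ℤ)) * PowerSeries.X ^ r =
      (1 - PowerSeries.X)⁻¹ * ∏ i, (1 - (1 - PowerSeries.X) ^ (d i)) := by
  classical
  have hinv : ((1 : ℚ⟦X⟧) - PowerSeries.X)⁻¹ = PowerSeries.mk 1 := by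
    rw [PowerSeries.inv_eq_iff_mul_eq_one]
    · exact PowerSeries.mk_one_mul_one_sub_eq_one ℚ
    · simp
  set G : ℚ⟦X⟧ := ∏ i, (1 - (1 - PowerSeries.X) ^ (d i)) with hGdef
  have hGcoeff : ∀ k, (PowerSeries.coeff k) G
      = ∑ S ∈ (Finset.univ : Finset (Fin r)).powerset,
          (-1:ℚ)^(S.card) * ((-1:ℚ)^k * (((∑ i ∈ S, d i).choose k : ℕ) : ℚ)) := by
    intro k
    have hexp : G = ∑ S ∈ (Finset.univ : Finset (Fin r)).powerset,
        (-1:ℚ⟦X⟧)^(S.card) * (1 - PowerSeries.X) ^ (∑ i ∈ S, d i) := by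
      rw [hGdef]
      have h1 : ∀ i : Fin r, (1 : ℚ⟦X⟧) - (1 - PowerSeries.X) ^ (d i)
          = (-1) * (1 - PowerSeries.X) ^ (d i) + 1 := by intro i; ring
      rw [Finset.prod_congr rfl fun i _ => h1 i, Finset.prod_add]
      refine Finset.sum_congr rfl fun S _ => ?_
      rw [Finset.prod_const_one, mul_one, Finset.prod_mul_distrib,
        Finset.prod_const, Finset.prod_pow_eq_pow_sum]
    rw [hexp, map_sum]
    refine Finset.sum_congr rfl fun S _ => ?_
    have h2 : ((-1:ℚ⟦X⟧)^(S.card)) = PowerSeries.C ((-1:ℚ)^S.card) := by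
      rw [map_pow, map_neg, map_one]
    rw [h2, PowerSeries.coeff_C_mul, coeff_one_sub_X_pow]
  have hdvd : PowerSeries.X ^ r ∣ G := by
    have : PowerSeries.X ^ r = ∏ _i : Fin r, (PowerSeries.X : ℚ⟦X⟧) := by
      rw [Finset.prod_const, Finset.card_univ, Fintype.card_fin]
    rw [this, hGdef]
    refine Finset.prod_dvd_prod_of_dvd _ _ fun i _ => ?_
    rw [PowerSeries.X_dvd_iff]
    simp
  have hvan : ∀ k, k < r → (PowerSeries.coeff k) G = 0 :=
    fun k hk => PowerSeries.X_pow_dvd_iff.mp hdvd k hk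
  rw [hinv]
  ext m
  rw [PowerSeries.coeff_mul_X_pow', PowerSeries.coeff_mul,
    Finset.Nat.sum_antidiagonal_eq_sum_range_succ_mk]
  simp only [PowerSeries.coeff_mk, Pi.one_apply, one_mul]
  by_cases hm : r ≤ m
  · rw [if_pos hm]
    have hrefl : (∑ k ∈ Finset.range (m+1), (PowerSeries.coeff (m - k)) G)
        = ∑ k ∈ Finset.range (m+1), (PowerSeries.coeff k) G := by
      have := Finset.sum_range_reflect (fun j => (PowerSeries.coeff j) G) (m+1)
      simpa using this
    rw [hrefl]
    have hswap : (∑ k ∈ Finset.range (m+1), (PowerSeries.coeff k) G)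
        = ∑ S ∈ (Finset.univ : Finset (Fin r)).powerset,
            (-1:ℚ)^(S.card) * ((-1:ℚ)^m * gbc (((∑ i ∈ S, d i : ℕ):ℚ) - 1) m) := by
      rw [Finset.sum_congr rfl fun k _ => hGcoeff k, Finset.sum_comm]
      refine Finset.sum_congr rfl fun S _ => ?_
      rw [← Finset.mul_sum, alt_sum]
    rw [hswap]
    unfold Td
    refine Finset.sum_congr rfl fun S _ => ?_
    have hmr : m - r + r = m := Nat.sub_add_cancel hm
    rw [hmr]
    have hcast : (-1 : ℚ) + ∑ i ∈ S, (((d i : ℤ) : ℚ)) = ((∑ i ∈ S, d i : ℕ):ℚ) - 1 := by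
      push_cast
      ring
    rw [hcast]
    rw [pow_add]
    ring
  · rw [if_neg hm]
    symm
    refine Finset.sum_eq_zero fun k _ => hvan _ ?_
    omega
end
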